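/- If w is a weight structure on a triangulated category 𝒞, then the classes 𝒞_{w≤0}, 𝒞_{w≥0}, and 𝒞_{w=0} = 𝒞_{w≤0} ∩ 𝒞_{w≥0} are extension-closed. -/

import Mathlib

open CategoryTheory CategoryTheory.Limits CategoryTheory.Pretriangulated ZeroObject

universe v u

/-- A weight structure (homological convention) on a triangulated category: a pair of
additive retract-closed classes `(le, ge)` (playing the roles of `C_{w≤0}` and `C_{w≥0}`)
satisfying shift-stability `C_{w≤0} ⊆ C_{w≤0}[1]`, `C_{w≥0}[1] ⊆ C_{w≥0}`, the
orthogonality `Hom(C_{w≤0}, C_{w≥0}[1]) = 0`, and the existence of weight decompositions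
`B → M → A → B[1]` with `B ∈ C_{w≤0}` and `A ∈ C_{w≥0}[1]`. -/
structure WeightStructure (C : Type u) [Category.{v} C] [Preadditive C] [HasZeroObject C]
    [HasBinaryBiproducts C] [HasShift C ℤ] [∀ n : ℤ, (shiftFunctor C n).Additive]
    [Pretriangulated C] where
  le : Set C
  ge : Set C
  le_zero : (0 : C) ∈ le
  ge_zero : (0 : C) ∈ ge
  le_retract : ∀ X Y : C, (∃ (i : X ⟶ Y) (r : Y ⟶ X), i ≫ r = 𝟙 X) → Y ∈ le → X ∈ le
  ge_retract : ∀ X Y : C, (∃ (i : X ⟶ Y) (r : Y ⟶ X), i ≫ r = 𝟙 X) → Y ∈ ge → X ∈ ge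
  le_add : ∀ X Y : C, X ∈ le → Y ∈ le → (X ⊞ Y) ∈ le
  ge_add : ∀ X Y : C, X ∈ ge → Y ∈ ge → (X ⊞ Y) ∈ ge
  le_shift : ∀ X : C, X ∈ le → X⟦(-1 : ℤ)⟧ ∈ le
  ge_shift : ∀ X : C, X ∈ ge → X⟦(1 : ℤ)⟧ ∈ ge
  orth : ∀ X ∈ le, ∀ Y ∈ ge, ∀ f : X ⟶ Y⟦(1 : ℤ)⟧, f = 0
  decomp : ∀ M : C, ∃ (B A : C) (f : B ⟶ M) (g : M ⟶ A) (h : A ⟶ B⟦(1 : ℤ)⟧),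
    B ∈ le ∧ A⟦(-1 : ℤ)⟧ ∈ ge ∧ Triangle.mk f g h ∈ distTriang C

variable {C : Type u} [Category.{v} C] [Preadditive C] [HasZeroObject C]
  [HasBinaryBiproducts C] [HasShift C ℤ] [∀ n : ℤ, (shiftFunctor C n).Additive]
  [Pretriangulated C]

/-- A class of objects is extension-closed if it contains `0` and is closed under
extensions in distinguished triangles. -/
def IsExtClosed (P : Set C) : Prop :=
  (0 : C) ∈ P ∧
    ∀ T : Triangle C, (T ∈ distTriang C) → T.obj₁ ∈ P → T.obj₃ ∈ P → T.obj₂ ∈ P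


lemma WeightStructure.orth' (w : WeightStructure C) {X Y : C} (hX : X ∈ w.le)
    (hY : Y⟦(-1 : ℤ)⟧ ∈ w.ge) (f : X ⟶ Y) : f = 0 := by
  have h := w.orth X hX _ hY (f ≫ (shiftNegShift Y (1 : ℤ)).inv)
  have h2 : (f ≫ (shiftNegShift Y (1 : ℤ)).inv) ≫ (shiftNegShift Y (1 : ℤ)).hom =
      (0 : X ⟶ Y⟦(-1:ℤ)⟧⟦(1:ℤ)⟧) ≫ (shiftNegShift Y (1 : ℤ)).hom := by rw [h]
  exact (Category.comp_id f).symm.trans ((congrArg (f ≫ ·) (Iso.inv_hom_id (shiftNegShift Y (1 : ℤ))).symm).trans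
    ((Category.assoc _ _ _).symm.trans (h2.trans zero_comp)))

lemma WeightStructure.le_ext (w : WeightStructure C) (T : Triangle C)
    (hT : T ∈ distTriang C) (h₁ : T.obj₁ ∈ w.le) (h₃ : T.obj₃ ∈ w.le) :
    T.obj₂ ∈ w.le := by
  obtain ⟨B', A', u, v, m, hB', hA', hD⟩ := w.decomp T.obj₂
  have hfv : T.mor₁ ≫ v = 0 := w.orth' h₁ hA' _
  obtain ⟨φ, hφ⟩ := Triangle.yoneda_exact₂ T hT v hfv
  have hv : v = 0 := by rw [hφ, w.orth' h₃ hA' φ, comp_zero]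
  obtain ⟨r, hr⟩ := Triangle.coyoneda_exact₂ _ hD (𝟙 T.obj₂) (by exact (Category.id_comp _).trans hv)
  exact w.le_retract _ _ ⟨r, u, hr.symm⟩ hB'

lemma WeightStructure.ge_ext (w : WeightStructure C) (T : Triangle C)
    (hT : T ∈ distTriang C) (h₁ : T.obj₁ ∈ w.ge) (h₃ : T.obj₃ ∈ w.ge) :
    T.obj₂ ∈ w.ge := by
  obtain ⟨B', A', u, v, m, hB', hA', hD⟩ := w.decomp (T.obj₂⟦(1 : ℤ)⟧)
  -- the triple rotation of `T`
  set T3 := T.rotate.rotate.rotate with hT3def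
  have hT3 : T3 ∈ distTriang C :=
    rot_of_distTriang _ (rot_of_distTriang _ (rot_of_distTriang _ hT))
  -- `u : B' ⟶ T.obj₂⟦1⟧` vanishes by orthogonality applied twice
  have h2 : u ≫ T3.mor₂ = 0 := w.orth B' hB' T.obj₃ h₃ _
  obtain ⟨g, hg⟩ := Triangle.coyoneda_exact₂ _ hT3 u h2
  have hu : u = 0 := by rw [hg, w.orth B' hB' T.obj₁ h₁ g]; exact zero_comp
  -- hence `T.obj₂⟦1⟧` is a retract of `A'`
  obtain ⟨r, hr⟩ := Triangle.yoneda_exact₂ _ hD (𝟙 (T.obj₂⟦(1:ℤ)⟧)) (by exact (Category.comp_id _).trans hu)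
  -- transport the retraction through the shift by `-1`
  refine w.ge_retract _ _
    ⟨(shiftShiftNeg T.obj₂ (1 : ℤ)).inv ≫ v⟦(-1 : ℤ)⟧',
      r⟦(-1 : ℤ)⟧' ≫ (shiftShiftNeg T.obj₂ (1 : ℤ)).hom, ?_⟩ hA'
  have : v⟦(-1 : ℤ)⟧' ≫ r⟦(-1 : ℤ)⟧' = 𝟙 (T.obj₂⟦(1:ℤ)⟧⟦(-1:ℤ)⟧) := by
    rw [← (shiftFunctor C (-1)).map_comp v r, show v ≫ r = 𝟙 _ from hr.symm]
    simp
  rw [Category.assoc, reassoc_of% this]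
  simp
  exact Iso.inv_hom_id_app _ _

/-- The classes `C_{w≤0}`, `C_{w≥0}` and `C_{w=0} = C_{w≤0} ∩ C_{w≥0}` of a weight
structure are extension-closed. -/
theorem stmt10 (w : WeightStructure C) :
    IsExtClosed w.le ∧ IsExtClosed w.ge ∧ IsExtClosed (w.le ∩ w.ge) := by
  refine ⟨⟨w.le_zero, fun T hT h₁ h₃ => w.le_ext T hT h₁ h₃⟩,
    ⟨w.ge_zero, fun T hT h₁ h₃ => w.ge_ext T hT h₁ h₃⟩,
    ⟨⟨w.le_zero, w.ge_zero⟩, fun T hT h₁ h₃ =>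
      ⟨w.le_ext T hT h₁.1 h₃.1, w.ge_ext T hT h₁.2 h₃.2⟩⟩⟩
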